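/- There exists an absolute constant C > 0 such that for any irrational α with convergent denominators q_k, and any k ≥ 2, ∑_{0<|q|<q_k} 1/‖qα‖ ≤ C·q_k·log(q_k + 1). -/

import Mathlib

/-- Distance from a real number to the nearest integer. -/
noncomputable def nint (x : ℝ) : ℝ := |x - round x|




lemma nint_le (x : ℝ) (z : ℤ) : nint x ≤ |x - z| := round_le x z

lemma nint_neg (x : ℝ) : nint (-x) = nint x := by
  apply le_antisymm
  · calc nint (-x) ≤ |(-x) - (-(round x) : ℤ)| := nint_le _ _
      _ = nint x := by unfold nint; push_cast; rw [← abs_neg]; ring_nf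
  · calc nint x ≤ |x - (-(round (-x)) : ℤ)| := nint_le _ _
      _ = nint (-x) := by unfold nint; push_cast; rw [← abs_neg (-x - _)]; ring_nf

lemma nint_nonneg (x : ℝ) : 0 ≤ nint x := abs_nonneg _

lemma nint_le_half (x : ℝ) : nint x ≤ 1/2 := abs_sub_round x

lemma not_irr_ratio (a : ℤ) (b : ℕ) : ¬ Irrational ((a:ℝ)/(b:ℝ)) := by
  have : (((a : ℚ)/(b : ℚ) : ℚ) : ℝ) = (a:ℝ)/(b:ℝ) := by push_cast; ring
  rw [← this]
  exact Rat.not_irrational _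

lemma abs_le_abs_add_of_mul_pos {a b : ℝ} (h : 0 < a * b) : |a| ≤ |a + b| := by
  rcases mul_pos_iff.mp h with ⟨ha, hb⟩ | ⟨ha, hb⟩
  · rw [abs_of_pos ha, abs_of_pos (by linarith)]; linarith
  · rw [abs_of_neg ha, abs_of_neg (by linarith)]; linarith

lemma abs_sub_le_max_of_mul_pos {a b : ℝ} (h : 0 < a * b) : |a - b| ≤ max |a| |b| := by
  rcases mul_pos_iff.mp h with ⟨ha, hb⟩ | ⟨ha, hb⟩
  · rw [abs_of_pos ha, abs_of_pos hb, abs_le]; constructor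
    · calc -(a ⊔ b) ≤ -b := by simp [le_max_right]
        _ ≤ a - b := by linarith
    · calc a - b ≤ a := by linarith
        _ ≤ max a b := le_max_left _ _
  · rw [abs_of_neg ha, abs_of_neg hb, abs_le]; constructor
    · calc -(-a ⊔ -b) ≤ a := by have := le_max_left (-a) (-b); linarith
        _ ≤ a - b := by linarith
    · calc a - b ≤ -b := by linarith
        _ ≤ max (-a) (-b) := le_max_right _ _

lemma tele (F : ℕ → ℝ) (a b : ℕ) (h : a ≤ b + 1) :
    ∑ m ∈ Finset.Icc a b, (F m - F (m+1)) = F a - F (b+1) := by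
  rw [show Finset.Icc a b = Finset.Ico a (b+1) by rw [Finset.Ico_add_one_right_eq_Icc]]
  rw [Finset.sum_Ico_eq_sum_range]
  have h2 := Finset.sum_range_sub (fun i => -F (a + i)) (b + 1 - a)
  have h3 : a + (b + 1 - a) = b + 1 := by omega
  calc ∑ i ∈ Finset.range (b + 1 - a), (F (a + i) - F (a + i + 1))
      = ∑ i ∈ Finset.range (b + 1 - a), ((fun i => -F (a + i)) (i+1) - (fun i => -F (a + i)) i) := by
        apply Finset.sum_congr rfl; intro i _; simp; ring_nf
    _ = -F (a + (b + 1 - a)) - -F (a + 0) := h2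
    _ = F a - F (b+1) := by rw [h3]; simp; ring

open GenContFract

variable {α : ℝ}

open GenContFract

variable {α : ℝ}

lemma my_nonterm (hα : Irrational α) (n : ℕ) : ¬(GenContFract.of α).TerminatedAt n := by
  intro h
  obtain ⟨r, hr⟩ := (terminates_iff_rat α).mp ⟨n, h⟩
  exact hα ⟨r, hr.symm⟩

lemma my_exists_int_nums (hα : Irrational α) (n : ℕ) :
    ∃ z : ℤ, (z : ℝ) = (GenContFract.of α).nums n := by
  suffices h : ∀ n, (∃ z : ℤ, (z : ℝ) = (GenContFract.of α).nums n) ∧ (∃ z : ℤ, (z : ℝ) = (GenContFract.of α).nums (n+1)) from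
    (h n).1
  intro n
  induction n with
  | zero =>
    constructor
    · exact ⟨⌊α⌋, by rw [zeroth_num_eq_h, of_h_eq_floor]⟩
    · obtain ⟨gp, s0⟩ : ∃ gp, (GenContFract.of α).s.get? 0 = some gp :=
        Option.ne_none_iff_exists'.mp (my_nonterm hα 0)
      have ha : gp.a = 1 := of_partNum_eq_one (partNum_eq_s_a s0)
      obtain ⟨z, hz⟩ : ∃ z : ℤ, gp.b = (z : ℝ) := exists_int_eq_of_partDen (partDen_eq_s_b s0)
      refine ⟨z * ⌊α⌋ + 1, ?_⟩
      rw [first_num_eq s0, ha, hz, of_h_eq_floor]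
      push_cast; ring
  | succ n ih =>
    refine ⟨ih.2, ?_⟩
    obtain ⟨z1, hz1⟩ := ih.1
    obtain ⟨z2, hz2⟩ := ih.2
    obtain ⟨gp, hs⟩ : ∃ gp, (GenContFract.of α).s.get? (n+1) = some gp :=
      Option.ne_none_iff_exists'.mp (my_nonterm hα (n+1))
    have ha : gp.a = 1 := of_partNum_eq_one (partNum_eq_s_a hs)
    obtain ⟨z, hz⟩ : ∃ z : ℤ, gp.b = (z : ℝ) := exists_int_eq_of_partDen (partDen_eq_s_b hs)
    refine ⟨z * z2 + z1, ?_⟩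
    rw [nums_recurrence hs rfl rfl, ha, hz, ← hz1, ← hz2]
    push_cast; ring

lemma my_dens_ge_one (hα : Irrational α) (n : ℕ) : (1 : ℝ) ≤ (GenContFract.of α).dens n := by
  have h := succ_nth_fib_le_of_nth_den (v := α) (n := n) (Or.inr (my_nonterm hα (n-1)))
  have h2 : 1 ≤ Nat.fib (n+1) := Nat.fib_pos.mpr n.succ_pos
  calc (1:ℝ) ≤ (Nat.fib (n+1) : ℝ) := by exact_mod_cast h2
    _ ≤ _ := h

lemma my_dens_rec (hα : Irrational α) (n : ℕ) :
    (GenContFract.of α).dens (n+1) + (GenContFract.of α).dens n ≤ (GenContFract.of α).dens (n+2) := by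
  obtain ⟨gp, hs⟩ : ∃ gp, (GenContFract.of α).s.get? (n+1) = some gp :=
    Option.ne_none_iff_exists'.mp (my_nonterm hα (n+1))
  have ha : gp.a = 1 := of_partNum_eq_one (partNum_eq_s_a hs)
  have hb : (1:ℝ) ≤ gp.b := of_one_le_get?_partDen (partDen_eq_s_b hs)
  have hrec := dens_recurrence hs rfl rfl
  rw [hrec, ha]
  nlinarith [my_dens_ge_one hα (n+1)]

lemma my_det (hα : Irrational α) (n : ℕ) :
    (GenContFract.of α).nums n * (GenContFract.of α).dens (n+1) - (GenContFract.of α).dens n * (GenContFract.of α).nums (n+1) = (-1)^(n+1) := by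
  exact SimpContFract.determinant (s := SimpContFract.of α) (my_nonterm hα n)

lemma my_dens_mono (hα : Irrational α) (n : ℕ) : (GenContFract.of α).dens n ≤ (GenContFract.of α).dens (n+1) :=
  of_den_mono

lemma my_abs (hα : Irrational α) (n : ℕ) :
    |α - (GenContFract.of α).nums n / (GenContFract.of α).dens n| ≤ 1 / ((GenContFract.of α).dens n * (GenContFract.of α).dens (n+1)) := by
  rw [← conv_eq_num_div_den]
  exact abs_sub_convs_le (my_nonterm hα n)
open GenContFract

variable {α : ℝ}


set_option maxHeartbeats 1000000 in
lemma key_pos (hα : Irrational α) (q : ℕ → ℕ)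
    (hq : ∀ n, (q n : ℝ) = (GenContFract.of α).dens n) (j : ℕ) (m p : ℤ)
    (hm : 0 < m) (hmQ : m < (q (j+1) : ℤ)) :
    1 / (2 * (q (j+1) : ℝ)) ≤ |(m:ℝ) * α - p| := by
  obtain ⟨Aj, hAj⟩ := my_exists_int_nums hα j
  obtain ⟨Ak, hAk⟩ := my_exists_int_nums hα (j+1)
  obtain ⟨Bj, hBj⟩ : ∃ b : ℝ, b = (q j : ℝ) := ⟨_, rfl⟩
  obtain ⟨Bk, hBk⟩ : ∃ b : ℝ, b = (q (j+1) : ℝ) := ⟨_, rfl⟩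
  obtain ⟨Bk2, hBk2⟩ : ∃ b : ℝ, b = (q (j+2) : ℝ) := ⟨_, rfl⟩
  have hBj1 : 1 ≤ Bj := by rw [hBj, hq]; exact my_dens_ge_one hα j
  have hBk1 : 1 ≤ Bk := by rw [hBk, hq]; exact my_dens_ge_one hα (j+1)
  have hBk21 : 1 ≤ Bk2 := by rw [hBk2, hq]; exact my_dens_ge_one hα (j+2)
  have hmono : Bj ≤ Bk := by rw [hBj, hBk, hq, hq]; exact my_dens_mono hα j
  have hrec : Bk + Bj ≤ Bk2 := by rw [hBj, hBk, hBk2, hq, hq, hq]; exact my_dens_rec hα j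
  have hBjpos : 0 < Bj := by linarith
  have hBkpos : 0 < Bk := by linarith
  have hBk2pos : 0 < Bk2 := by linarith
  obtain ⟨ej, hej⟩ : ∃ e : ℝ, e = Bj * α - Aj := ⟨_, rfl⟩
  obtain ⟨ek, hek⟩ : ∃ e : ℝ, e = Bk * α - Ak := ⟨_, rfl⟩
  -- upper bounds
  have habsj : |ej| ≤ 1 / Bk := by
    have h := my_abs hα j
    rw [← hAj, ← hq j, ← hq (j+1), ← hBj, ← hBk] at h
    have h2 : ej = Bj * (α - Aj / Bj) := by rw [hej]; field_simp
    rw [h2, abs_mul, abs_of_pos hBjpos]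
    calc Bj * |α - (Aj:ℝ) / Bj| ≤ Bj * (1 / (Bj * Bk)) :=
          mul_le_mul_of_nonneg_left h hBjpos.le
      _ = 1 / Bk := by field_simp
  have habsk : |ek| ≤ 1 / Bk2 := by
    have h := my_abs hα (j+1)
    rw [← hAk, ← hq (j+1), ← hq (j+2), ← hBk, ← hBk2] at h
    have h2 : ek = Bk * (α - Ak / Bk) := by rw [hek]; field_simp
    rw [h2, abs_mul, abs_of_pos hBkpos]
    calc Bk * |α - (Ak:ℝ) / Bk| ≤ Bk * (1 / (Bk * Bk2)) :=
          mul_le_mul_of_nonneg_left h hBkpos.le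
      _ = 1 / Bk2 := by field_simp
  -- nonvanishing
  have hejne : ej ≠ 0 := by
    intro h
    rw [hej] at h
    apply not_irr_ratio Aj (q j)
    have h2 : (Aj : ℝ) / ((q j : ℕ) : ℝ) = α := by
      rw [← hBj, div_eq_iff (by linarith : Bj ≠ 0)]; linarith
    rwa [h2]
  have hekne : ek ≠ 0 := by
    intro h
    rw [hek] at h
    apply not_irr_ratio Ak (q (j+1))
    have h2 : (Ak : ℝ) / ((q (j+1) : ℕ) : ℝ) = α := by
      rw [← hBk, div_eq_iff (by linarith : Bk ≠ 0)]; linarith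
    rwa [h2]
  -- strict upper bound for ej
  have hstrict : |ej| < 1 / Bk := by
    rcases lt_or_eq_of_le habsj with h | h
    · exact h
    · exfalso
      have h1 : |Bk * ej| = 1 := by
        rw [abs_mul, abs_of_pos hBkpos, h]; field_simp
      rcases (abs_eq (by norm_num : (0:ℝ) ≤ 1)).mp h1 with h2 | h2 <;> rw [hej] at h2
      · apply not_irr_ratio ((q (j+1) : ℤ) * Aj + 1) (q j * q (j+1))
        have h3 : (((q (j+1) : ℤ) * Aj + 1 : ℤ) : ℝ) / ((q j * q (j+1) : ℕ) : ℝ) = α := by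
          rw [div_eq_iff]
          · push_cast
            rw [← hBj, ← hBk]
            linear_combination -h2
          · push_cast
            rw [← hBj, ← hBk]
            positivity
        rwa [h3]
      · apply not_irr_ratio ((q (j+1) : ℤ) * Aj - 1) (q j * q (j+1))
        have h3 : (((q (j+1) : ℤ) * Aj - 1 : ℤ) : ℝ) / ((q j * q (j+1) : ℕ) : ℝ) = α := by
          rw [div_eq_iff]
          · push_cast
            rw [← hBj, ← hBk]
            linear_combination -h2
          · push_cast
            rw [← hBj, ← hBk]
            positivity
        rwa [h3]
  -- determinant identity over ℝ
  have hdet := my_det hα j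
  rw [← hAj, ← hAk, ← hq j, ← hq (j+1), ← hBj, ← hBk] at hdet
  have hdetR : Bj * ek - Bk * ej = (-1:ℝ)^(j+1) := by
    rw [hej, hek]; linear_combination hdet
  have hdetabs : |Bj * ek - Bk * ej| = 1 := by
    rw [hdetR, abs_pow, abs_neg, abs_one, one_pow]
  -- opposite signs
  have hsign : ej * ek < 0 := by
    rcases lt_trichotomy (ej * ek) 0 with h | h | h
    · exact h
    · exact absurd (mul_eq_zero.mp h) (by simp [hejne, hekne])
    · exfalso
      have hab : 0 < (Bj * ek) * (Bk * ej) := by nlinarith [mul_pos (mul_pos hBjpos hBkpos) h]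
      have h1 := abs_sub_le_max_of_mul_pos hab
      rw [hdetabs] at h1
      have h2 : |Bj * ek| < 1 := by
        rw [abs_mul, abs_of_pos hBjpos]
        calc Bj * |ek| ≤ Bj * (1 / Bk2) := mul_le_mul_of_nonneg_left habsk hBjpos.le
          _ < 1 := by rw [mul_one_div, div_lt_one hBk2pos]; linarith
      have h3 : |Bk * ej| < 1 := by
        rw [abs_mul, abs_of_pos hBkpos]
        calc Bk * |ej| < Bk * (1 / Bk) := mul_lt_mul_of_pos_left hstrict hBkpos
          _ = 1 := by field_simp
      rcases max_cases |Bj * ek| |Bk * ej| with ⟨heq, _⟩ | ⟨heq, _⟩ <;> rw [heq] at h1 <;> linarith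
  -- lower bound for |ej|
  have hlow : 1 / (2 * Bk) ≤ |ej| := by
    have h1 : 1 ≤ Bj * |ek| + Bk * |ej| := by
      calc (1:ℝ) = |Bj * ek - Bk * ej| := hdetabs.symm
        _ ≤ |Bj * ek| + |Bk * ej| := abs_sub _ _
        _ = Bj * |ek| + Bk * |ej| := by
            rw [abs_mul, abs_mul, abs_of_pos hBjpos, abs_of_pos hBkpos]
    have h2 : Bj * |ek| ≤ Bj / (Bj + Bk) := by
      calc Bj * |ek| ≤ Bj * (1 / Bk2) := mul_le_mul_of_nonneg_left habsk hBjpos.le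
        _ ≤ Bj / (Bj + Bk) := by
          rw [mul_one_div, div_le_div_iff₀ hBk2pos (by linarith)]
          nlinarith
    have h3 : 1 - Bj / (Bj + Bk) = Bk / (Bj + Bk) := by field_simp; ring
    have h4 : Bk / (Bj + Bk) ≤ Bk * |ej| := by linarith
    rw [div_le_iff₀ (by linarith : (0:ℝ) < 2 * Bk)]
    rw [div_le_iff₀ (by linarith : (0:ℝ) < Bj + Bk)] at h4
    nlinarith [abs_nonneg ej]
  -- integer determinant and decomposition
  obtain ⟨Bjz, hBjz⟩ : ∃ b : ℤ, b = (q j : ℤ) := ⟨_, rfl⟩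
  obtain ⟨Bkz, hBkz⟩ : ∃ b : ℤ, b = (q (j+1) : ℤ) := ⟨_, rfl⟩
  have hBjzR : ((Bjz : ℤ) : ℝ) = Bj := by rw [hBjz, hBj]; push_cast; ring
  have hBkzR : ((Bkz : ℤ) : ℝ) = Bk := by rw [hBkz, hBk]; push_cast; ring
  obtain ⟨D, hD⟩ : ∃ d : ℤ, d = Aj * Bkz - Bjz * Ak := ⟨_, rfl⟩
  have hDR : ((D : ℤ) : ℝ) = (-1:ℝ)^(j+1) := by
    rw [hD]; push_cast; rw [hBjzR, hBkzR]; linear_combination hdet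
  have hD2 : D * D = 1 := by
    have h : ((D * D : ℤ) : ℝ) = 1 := by
      push_cast
      rw [hDR, ← pow_add]
      exact Even.neg_one_pow ⟨j+1, by ring⟩
    exact_mod_cast h
  obtain ⟨x, hx⟩ : ∃ x : ℤ, x = D * (p * Bkz - m * Ak) := ⟨_, rfl⟩
  obtain ⟨y, hy⟩ : ∃ y : ℤ, y = D * (m * Aj - p * Bjz) := ⟨_, rfl⟩
  have hxB : x * Bjz + y * Bkz = m := by
    rw [hx, hy]
    linear_combination m * hD2 - m * D * hD
  have hxA : x * Aj + y * Ak = p := by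
    rw [hx, hy]
    linear_combination p * hD2 - p * D * hD
  have hdecomp : (m:ℝ) * α - p = x * ej + y * ek := by
    have h1 : (m:ℝ) = x * Bj + y * Bk := by
      rw [← hBjzR, ← hBkzR]
      exact_mod_cast hxB.symm
    have h2 : (p:ℝ) = x * Aj + y * Ak := by exact_mod_cast hxA.symm
    rw [h1, h2, hej, hek]; ring
  have hqj1 : 1 ≤ q j := by
    have : (1:ℝ) ≤ (q j : ℝ) := by rw [← hBj]; exact hBj1
    exact_mod_cast this
  have hBjzpos : 0 < Bjz := by rw [hBjz]; exact_mod_cast hqj1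
  have hmBkz : m < Bkz := by rw [hBkz]; exact hmQ
  have hxne : x ≠ 0 := by
    intro h0
    rw [h0] at hxB
    simp at hxB
    rcases lt_trichotomy y 0 with hy0 | hy0 | hy0
    · nlinarith
    · rw [hy0] at hxB; simp at hxB; omega
    · nlinarith
  -- final goal reduction
  have hgoal : 1 / (2 * Bk) ≤ |(m:ℝ) * α - p| := by
    rcases eq_or_ne y 0 with hy0 | hy0
    · -- y = 0 : m α - p = x e_j
      have h1 : |(m:ℝ) * α - p| = |(x:ℝ)| * |ej| := by
        rw [hdecomp, hy0]; push_cast; rw [zero_mul, add_zero, abs_mul]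
      have h2 : (1:ℝ) ≤ |(x:ℝ)| := by
        have : (1:ℤ) ≤ |x| := Int.one_le_abs hxne
        calc (1:ℝ) ≤ ((|x| : ℤ) : ℝ) := by exact_mod_cast this
          _ = |(x:ℝ)| := by push_cast; ring
      calc 1 / (2 * Bk) ≤ |ej| := hlow
        _ = 1 * |ej| := (one_mul _).symm
        _ ≤ |(x:ℝ)| * |ej| := by
            exact mul_le_mul_of_nonneg_right h2 (abs_nonneg _)
        _ = |(m:ℝ) * α - p| := h1.symm
    · -- x ≠ 0, y ≠ 0 : opposite signs
      have hxy : x * y < 0 := by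
        rcases lt_trichotomy (x * y) 0 with h | h | h
        · exact h
        · exact absurd (mul_eq_zero.mp h) (by simp [hxne, hy0])
        · exfalso
          rcases mul_pos_iff.mp h with ⟨hx1, hy1⟩ | ⟨hx1, hy1⟩
          · nlinarith
          · nlinarith
      have hprod : 0 < ((x:ℝ) * ej) * ((y:ℝ) * ek) := by
        have hxyR : (x:ℝ) * (y:ℝ) < 0 := by exact_mod_cast hxy
        nlinarith
      have h1 : |(x:ℝ) * ej| ≤ |(m:ℝ) * α - p| := by
        rw [hdecomp]
        exact abs_le_abs_add_of_mul_pos hprod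
      have h2 : (1:ℝ) ≤ |(x:ℝ)| := by
        have : (1:ℤ) ≤ |x| := Int.one_le_abs hxne
        calc (1:ℝ) ≤ ((|x| : ℤ) : ℝ) := by exact_mod_cast this
          _ = |(x:ℝ)| := by push_cast; ring
      calc 1 / (2 * Bk) ≤ |ej| := hlow
        _ ≤ |(x:ℝ)| * |ej| := by nlinarith [abs_nonneg ej]
        _ = |(x:ℝ) * ej| := (abs_mul _ _).symm
        _ ≤ |(m:ℝ) * α - p| := h1
  rw [← hBk]
  exact hgoal

lemma key_sym (hα : Irrational α) (q : ℕ → ℕ)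
    (hq : ∀ n, (q n : ℝ) = (GenContFract.of α).dens n) (j : ℕ) (m p : ℤ)
    (hm : m ≠ 0) (hmQ : |m| < (q (j+1) : ℤ)) :
    1 / (2 * (q (j+1) : ℝ)) ≤ |(m:ℝ) * α - p| := by
  rcases lt_or_gt_of_ne hm with h | h
  · have h1 := key_pos hα q hq j (-m) (-p) (by omega) (by rw [abs_lt] at hmQ; omega)
    have h2 : ((-m : ℤ):ℝ)*α - ((-p:ℤ):ℝ) = -((m:ℝ)*α - p) := by push_cast; ring
    rw [h2, abs_neg] at h1
    exact h1
  · exact key_pos hα q hq j m p h (by rw [abs_lt] at hmQ; omega)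



set_option maxHeartbeats 1000000 in
lemma main_est (α : ℝ) (Q : ℕ) (hQ2 : 2 ≤ Q)
    (hsep : ∀ m p : ℤ, m ≠ 0 → |m| < (Q:ℤ) → 1/(2*(Q:ℝ)) ≤ |(m:ℝ)*α - p|) :
    ∑ i ∈ (Finset.Ioo (-(Q:ℤ)) (Q:ℤ)).erase 0, 1 / nint ((i:ℝ)*α) ≤
      100 * (Q:ℝ) * Real.log ((Q:ℝ)+1) := by
  have hQr : (2:ℝ) ≤ (Q:ℝ) := by exact_mod_cast hQ2
  have hQpos : (0:ℝ) < (Q:ℝ) := by linarith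
  have hnint : ∀ i : ℤ, i ≠ 0 → |i| < (Q:ℤ) → 1/(2*(Q:ℝ)) ≤ nint ((i:ℝ)*α) :=
    fun i h1 h2 => hsep i (round ((i:ℝ)*α)) h1 h2
  have hnintpos : ∀ i : ℤ, i ≠ 0 → |i| < (Q:ℤ) → 0 < nint ((i:ℝ)*α) := by
    intro i h1 h2
    have := hnint i h1 h2
    have : (0:ℝ) < 1/(2*(Q:ℝ)) := by positivity
    linarith [hnint i h1 h2]
  -- split the sum into positive and negative parts
  obtain ⟨T, hT⟩ : ∃ T : Finset ℤ, T = Finset.Ioo (0:ℤ) (Q:ℤ) := ⟨_, rfl⟩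
  have hsplit : ∑ i ∈ (Finset.Ioo (-(Q:ℤ)) (Q:ℤ)).erase 0, 1 / nint ((i:ℝ)*α) =
      2 * ∑ i ∈ T, 1 / nint ((i:ℝ)*α) := by
    have hset : (Finset.Ioo (-(Q:ℤ)) (Q:ℤ)).erase 0 = T ∪ T.image (fun i => -i) := by
      rw [hT]
      ext i
      simp only [Finset.mem_erase, Finset.mem_Ioo, Finset.mem_union, Finset.mem_image]
      constructor
      · rintro ⟨h0, h1, h2⟩
        rcases lt_or_gt_of_ne h0 with h | h
        · right; exact ⟨-i, ⟨by omega, by omega⟩, by omega⟩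
        · left; exact ⟨h, h2⟩
      · rintro (⟨h1, h2⟩ | ⟨a, ⟨ha1, ha2⟩, rfl⟩) <;> refine ⟨by omega, by omega, by omega⟩
    have hdisj : Disjoint T (T.image (fun i => -i)) := by
      rw [Finset.disjoint_left]
      intro a haT haI
      rw [hT] at haT haI
      simp only [Finset.mem_Ioo, Finset.mem_image] at haT haI
      obtain ⟨b, hb, hba⟩ := haI
      omega
    rw [hset, Finset.sum_union hdisj, Finset.sum_image (by intro a _ b _ h; simp only [neg_inj] at h; omega)]
    have : ∀ i ∈ T, 1 / nint (((-i : ℤ):ℝ)*α) = 1 / nint ((i:ℝ)*α) := by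
      intro i _
      have : ((-i : ℤ):ℝ) * α = -((i:ℝ)*α) := by push_cast; ring
      rw [this, nint_neg]
    rw [Finset.sum_congr rfl this]
    ring
  rw [hsplit]
  -- basic facts about members of T
  have hmemT : ∀ i ∈ T, i ≠ 0 ∧ |i| < (Q:ℤ) := by
    intro i hi; rw [hT] at hi; simp only [Finset.mem_Ioo] at hi
    exact ⟨by omega, by rw [abs_lt]; constructor <;> omega⟩
  -- the level function
  obtain ⟨F, hF⟩ : ∃ F : ℤ → ℕ, F = fun i : ℤ => ⌊nint ((i:ℝ)*α) * (2*(Q:ℝ))⌋₊ := ⟨_, rfl⟩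
  have hF1 : ∀ i ∈ T, 1 ≤ F i := by
    intro i hi
    obtain ⟨h1, h2⟩ := hmemT i hi
    rw [hF]
    apply Nat.le_floor
    have := hnint i h1 h2
    rw [Nat.cast_one, ← div_le_iff₀ (by positivity : (0:ℝ) < 2*(Q:ℝ))]
    calc (1:ℝ)/(2*(Q:ℝ)) ≤ nint ((i:ℝ)*α) := this
      _ = _ := rfl
  have hFQ : ∀ i ∈ T, F i ≤ Q := by
    intro i hi
    rw [hF]
    calc ⌊nint ((i:ℝ)*α) * (2*(Q:ℝ))⌋₊ ≤ ⌊(Q:ℝ)⌋₊ := by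
          apply Nat.floor_mono
          calc nint ((i:ℝ)*α) * (2*(Q:ℝ)) ≤ (1/2) * (2*(Q:ℝ)) := by
                apply mul_le_mul_of_nonneg_right (nint_le_half _) (by positivity)
            _ = (Q:ℝ) := by ring
      _ = Q := Nat.floor_natCast Q
  have hFle : ∀ i ∈ T, ((F i : ℕ):ℝ) * (1/(2*(Q:ℝ))) ≤ nint ((i:ℝ)*α) := by
    intro i hi
    rw [hF]
    have h0 : (0:ℝ) ≤ nint ((i:ℝ)*α) * (2*(Q:ℝ)) := mul_nonneg (nint_nonneg _) (by positivity)
    calc (⌊nint ((i:ℝ)*α) * (2*(Q:ℝ))⌋₊ : ℝ) * (1/(2*(Q:ℝ)))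
        = (⌊nint ((i:ℝ)*α) * (2*(Q:ℝ))⌋₊ : ℝ) / (2*(Q:ℝ)) := by ring
      _ ≤ nint ((i:ℝ)*α) * (2*(Q:ℝ)) / (2*(Q:ℝ)) := by
          apply div_le_div_of_nonneg_right ?_ (by positivity)
          · exact Nat.floor_le h0
      _ = nint ((i:ℝ)*α) := by field_simp
  have hterm : ∀ i ∈ T, 1 / nint ((i:ℝ)*α) ≤ (2*(Q:ℝ)) * (1/(F i : ℝ)) := by
    intro i hi
    obtain ⟨h1, h2⟩ := hmemT i hi
    have hF1' : (1:ℝ) ≤ (F i : ℝ) := by exact_mod_cast hF1 i hi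
    have hpos : (0:ℝ) < (F i : ℝ) * (1/(2*(Q:ℝ))) := by positivity
    calc 1 / nint ((i:ℝ)*α) ≤ 1 / ((F i : ℝ) * (1/(2*(Q:ℝ)))) :=
          one_div_le_one_div_of_le hpos (hFle i hi)
      _ = (2*(Q:ℝ)) * (1/(F i : ℝ)) := by
          field_simp
  -- cardinality bound via separation
  have hcard : ∀ m : ℕ, 1 ≤ m →
      ((T.filter (fun i => F i ≤ m)).card) ≤ 5 * m := by
    intro m hm
    obtain ⟨G, hG⟩ : ∃ G : ℤ → ℤ,
        G = fun i : ℤ => ⌊((i:ℝ)*α - round ((i:ℝ)*α)) * (2*(Q:ℝ))⌋ := ⟨_, rfl⟩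
    have hmap : ∀ i ∈ T.filter (fun i => F i ≤ m), G i ∈ Finset.Icc (-(m:ℤ)-1) (m:ℤ) := by
      intro i hi
      rw [Finset.mem_filter] at hi
      obtain ⟨hiT, hiF⟩ := hi
      have habs : nint ((i:ℝ)*α) * (2*(Q:ℝ)) < (m:ℝ) + 1 := by
        have h1 : nint ((i:ℝ)*α) * (2*(Q:ℝ)) < (F i : ℝ) + 1 := by
          rw [hF]; exact Nat.lt_floor_add_one _
        have h2 : ((F i : ℕ):ℝ) ≤ (m:ℝ) := by exact_mod_cast hiF
        linarith
      have habs2 : |((i:ℝ)*α - round ((i:ℝ)*α)) * (2*(Q:ℝ))| < (m:ℝ) + 1 := by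
        rw [abs_mul, abs_of_pos (by positivity : (0:ℝ) < 2*(Q:ℝ))]
        exact habs
      rw [abs_lt] at habs2
      have hGval : G i = ⌊((i:ℝ)*α - round ((i:ℝ)*α)) * (2*(Q:ℝ))⌋ := by rw [hG]
      rw [Finset.mem_Icc, hGval]
      constructor
      · apply Int.le_floor.mpr
        push_cast
        linarith [habs2.1]
      · have h6 : (((i:ℝ)*α - round ((i:ℝ)*α)) * (2*(Q:ℝ))) < ((m:ℤ) + 1 : ℤ) := by
          push_cast; linarith [habs2.2]
        have h7 := Int.floor_lt.mpr h6
        omega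
    have hinj : Set.InjOn G (T.filter (fun i => F i ≤ m)) := by
      intro i hi i' hi' hGi
      by_contra hne
      rw [Finset.coe_filter, Set.mem_setOf_eq] at hi hi'
      obtain ⟨hiT, _⟩ := hi
      obtain ⟨hiT', _⟩ := hi'
      rw [hT] at hiT hiT'
      simp only [Finset.mem_Ioo] at hiT hiT'
      -- separation
      have hd : (1:ℝ)/(2*(Q:ℝ)) ≤
          |((i - i' : ℤ):ℝ)*α - ((round ((i:ℝ)*α) - round ((i':ℝ)*α) : ℤ):ℝ)| := by
        apply hsep
        · omega
        · rw [abs_lt]; constructor <;> omega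
      have heq : ((i - i' : ℤ):ℝ)*α - ((round ((i:ℝ)*α) - round ((i':ℝ)*α) : ℤ):ℝ) =
          ((i:ℝ)*α - round ((i:ℝ)*α)) - ((i':ℝ)*α - round ((i':ℝ)*α)) := by
        push_cast; ring
      -- floor equality gives closeness
      set u := ((i:ℝ)*α - round ((i:ℝ)*α)) * (2*(Q:ℝ)) with hu
      set u' := ((i':ℝ)*α - round ((i':ℝ)*α)) * (2*(Q:ℝ)) with hu'
      have hGu : G i = ⌊u⌋ := by rw [hG]
      have hGu' : G i' = ⌊u'⌋ := by rw [hG]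
      have hclose : |u - u'| < 1 := by
        rw [abs_lt]
        have h1 : (⌊u⌋ : ℝ) ≤ u := Int.floor_le u
        have h2 : u < ⌊u⌋ + 1 := Int.lt_floor_add_one u
        have h3 : (⌊u'⌋ : ℝ) ≤ u' := Int.floor_le u'
        have h4 : u' < ⌊u'⌋ + 1 := Int.lt_floor_add_one u'
        have h5 : (⌊u⌋ : ℝ) = (⌊u'⌋ : ℝ) := by
          rw [← hGu, ← hGu', hGi]
        constructor <;> linarith
      have hfar : (1:ℝ) ≤ |u - u'| := by
        have : u - u' = (((i:ℝ)*α - round ((i:ℝ)*α)) - ((i':ℝ)*α - round ((i':ℝ)*α))) * (2*(Q:ℝ)) := by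
          rw [hu, hu']; ring
        rw [this, abs_mul, abs_of_pos (by positivity : (0:ℝ) < 2*(Q:ℝ))]
        rw [← heq]
        calc (1:ℝ) = (1/(2*(Q:ℝ))) * (2*(Q:ℝ)) := by field_simp
          _ ≤ _ := by
              apply mul_le_mul_of_nonneg_right hd (by positivity)
      linarith
    have hle := Finset.card_le_card_of_injOn G hmap hinj
    have hIcc : (Finset.Icc (-(m:ℤ)-1) (m:ℤ)).card = 2*m + 2 := by
      rw [Int.card_Icc]
      omega
    omega
  -- the telescoping identity
  have hid : ∀ i ∈ T, 1/(F i : ℝ) =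
      (∑ m ∈ Finset.Icc (F i) Q, (1/(m:ℝ) - 1/((m:ℝ)+1))) + 1/((Q:ℝ)+1) := by
    intro i hi
    have h1 := tele (fun m => 1/(m:ℝ)) (F i) Q (by have := hFQ i hi; omega)
    have h2 : ∀ m ∈ Finset.Icc (F i) Q,
        ((fun m : ℕ => 1/(m:ℝ)) m - (fun m : ℕ => 1/(m:ℝ)) (m+1)) = 1/(m:ℝ) - 1/((m:ℝ)+1) := by
      intro m _; push_cast; ring
    rw [Finset.sum_congr rfl h2] at h1
    rw [h1]
    push_cast
    ring
  -- rewrite inner sums as filtered sums over Icc 1 Q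
  have hid2 : ∀ i ∈ T, ∑ m ∈ Finset.Icc (F i) Q, (1/(m:ℝ) - 1/((m:ℝ)+1)) =
      ∑ m ∈ Finset.Icc 1 Q, (if F i ≤ m then (1/(m:ℝ) - 1/((m:ℝ)+1)) else 0) := by
    intro i hi
    rw [← Finset.sum_filter]
    congr 1
    ext m
    simp only [Finset.mem_Icc, Finset.mem_filter]
    have := hF1 i hi
    omega
  -- the harmonic-type bound
  have hharm : ∑ m ∈ Finset.Icc 1 Q, (5:ℝ)/((m:ℝ)+1) ≤ 5 * Real.log ((Q:ℝ)+1) := by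
    have hlog : ∀ m ∈ Finset.Icc 1 Q, (5:ℝ)/((m:ℝ)+1) ≤
        5 * ((fun m : ℕ => -Real.log m) m - (fun m : ℕ => -Real.log m) (m+1)) := by
      intro m hm
      rw [Finset.mem_Icc] at hm
      have hm1 : (1:ℝ) ≤ (m:ℝ) := by exact_mod_cast hm.1
      have hlogle := Real.log_le_sub_one_of_pos
        (show (0:ℝ) < (m:ℝ)/((m:ℝ)+1) by positivity)
      rw [Real.log_div (by linarith) (by linarith)] at hlogle
      have hsub : (m:ℝ)/((m:ℝ)+1) - 1 = -(1/((m:ℝ)+1)) := by field_simp; ring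
      rw [hsub] at hlogle
      have h5 : (5:ℝ)/((m:ℝ)+1) = 5*(1/((m:ℝ)+1)) := by ring
      have hcast : ((fun m : ℕ => -Real.log m) m - (fun m : ℕ => -Real.log m) (m+1))
          = Real.log ((m:ℝ)+1) - Real.log (m:ℝ) := by
        simp only
        push_cast
        ring
      rw [h5, hcast]
      linarith
    calc ∑ m ∈ Finset.Icc 1 Q, (5:ℝ)/((m:ℝ)+1)
        ≤ ∑ m ∈ Finset.Icc 1 Q,
            5 * ((fun m : ℕ => -Real.log m) m - (fun m : ℕ => -Real.log m) (m+1)) :=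
          Finset.sum_le_sum hlog
      _ = 5 * ∑ m ∈ Finset.Icc 1 Q,
            ((fun m : ℕ => -Real.log m) m - (fun m : ℕ => -Real.log m) (m+1)) := by
          rw [Finset.mul_sum]
      _ = 5 * ((fun m : ℕ => -Real.log m) 1 - (fun m : ℕ => -Real.log m) (Q+1)) := by
          rw [tele (fun m : ℕ => -Real.log m) 1 Q (by omega)]
      _ ≤ 5 * Real.log ((Q:ℝ)+1) := by
          apply le_of_eq
          simp only
          push_cast
          rw [Real.log_one]
          ring
  -- assemble
  have hS3 : ∑ i ∈ T, (∑ m ∈ Finset.Icc (F i) Q, (1/(m:ℝ) - 1/((m:ℝ)+1))) ≤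
      5 * Real.log ((Q:ℝ)+1) := by
    calc ∑ i ∈ T, (∑ m ∈ Finset.Icc (F i) Q, (1/(m:ℝ) - 1/((m:ℝ)+1)))
        = ∑ i ∈ T, ∑ m ∈ Finset.Icc 1 Q,
            (if F i ≤ m then (1/(m:ℝ) - 1/((m:ℝ)+1)) else 0) :=
          Finset.sum_congr rfl hid2
      _ = ∑ m ∈ Finset.Icc 1 Q, ∑ i ∈ T,
            (if F i ≤ m then (1/(m:ℝ) - 1/((m:ℝ)+1)) else 0) := Finset.sum_comm
      _ ≤ ∑ m ∈ Finset.Icc 1 Q, (5:ℝ)/((m:ℝ)+1) := by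
          apply Finset.sum_le_sum
          intro m hm
          rw [Finset.mem_Icc] at hm
          have hm1 : (1:ℝ) ≤ (m:ℝ) := by exact_mod_cast hm.1
          have hd0 : (0:ℝ) ≤ 1/(m:ℝ) - 1/((m:ℝ)+1) := by
            rw [sub_nonneg]
            apply one_div_le_one_div_of_le (by linarith) (by linarith)
          rw [← Finset.sum_filter, Finset.sum_const, nsmul_eq_mul]
          have hc : ((T.filter (fun i => F i ≤ m)).card : ℝ) ≤ 5*(m:ℝ) := by
            have := hcard m hm.1
            calc ((T.filter (fun i => F i ≤ m)).card : ℝ) ≤ ((5*m : ℕ):ℝ) := by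
                  exact_mod_cast this
              _ = 5*(m:ℝ) := by push_cast; ring
          calc ((T.filter (fun i => F i ≤ m)).card : ℝ) * (1/(m:ℝ) - 1/((m:ℝ)+1))
              ≤ 5*(m:ℝ) * (1/(m:ℝ) - 1/((m:ℝ)+1)) := mul_le_mul_of_nonneg_right hc hd0
            _ = (5:ℝ)/((m:ℝ)+1) := by
                field_simp
                ring
      _ ≤ 5 * Real.log ((Q:ℝ)+1) := hharm
  have hcardT : (T.card : ℝ) ≤ (Q:ℝ) + 1 := by
    have : T.card ≤ Q := by
      rw [hT]
      rw [Int.card_Ioo]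
      omega
    calc (T.card : ℝ) ≤ (Q:ℝ) := by exact_mod_cast this
      _ ≤ (Q:ℝ) + 1 := by linarith
  have hsum2 : ∑ i ∈ T, 1/(F i : ℝ) ≤ 5 * Real.log ((Q:ℝ)+1) + 1 := by
    calc ∑ i ∈ T, 1/(F i : ℝ)
        = ∑ i ∈ T, ((∑ m ∈ Finset.Icc (F i) Q, (1/(m:ℝ) - 1/((m:ℝ)+1))) + 1/((Q:ℝ)+1)) :=
          Finset.sum_congr rfl hid
      _ = (∑ i ∈ T, ∑ m ∈ Finset.Icc (F i) Q, (1/(m:ℝ) - 1/((m:ℝ)+1)))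
            + (T.card : ℝ) * (1/((Q:ℝ)+1)) := by
          rw [Finset.sum_add_distrib, Finset.sum_const, nsmul_eq_mul]
      _ ≤ 5 * Real.log ((Q:ℝ)+1) + 1 := by
          have h1 : (T.card : ℝ) * (1/((Q:ℝ)+1)) ≤ 1 := by
            calc (T.card : ℝ) * (1/((Q:ℝ)+1)) ≤ ((Q:ℝ)+1) * (1/((Q:ℝ)+1)) := by
                  apply mul_le_mul_of_nonneg_right hcardT (by positivity)
              _ = 1 := by field_simp
          linarith [hS3]
  have hlog1 : (1:ℝ) ≤ Real.log ((Q:ℝ)+1) := by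
    have h3 : Real.exp 1 < (Q:ℝ)+1 := by
      have := Real.exp_one_lt_d9
      linarith
    have := (Real.lt_log_iff_exp_lt (by linarith : (0:ℝ) < (Q:ℝ)+1)).mpr h3
    linarith
  have hfinal : ∑ i ∈ T, 1 / nint ((i:ℝ)*α) ≤ (2*(Q:ℝ)) * (5 * Real.log ((Q:ℝ)+1) + 1) := by
    calc ∑ i ∈ T, 1 / nint ((i:ℝ)*α) ≤ ∑ i ∈ T, (2*(Q:ℝ)) * (1/(F i : ℝ)) :=
          Finset.sum_le_sum hterm
      _ = (2*(Q:ℝ)) * ∑ i ∈ T, 1/(F i : ℝ) := by rw [Finset.mul_sum]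
      _ ≤ (2*(Q:ℝ)) * (5 * Real.log ((Q:ℝ)+1) + 1) := by
          apply mul_le_mul_of_nonneg_left hsum2 (by positivity)
  calc 2 * ∑ i ∈ T, 1 / nint ((i:ℝ)*α) ≤ 2 * ((2*(Q:ℝ)) * (5 * Real.log ((Q:ℝ)+1) + 1)) := by
        linarith
    _ ≤ 100 * (Q:ℝ) * Real.log ((Q:ℝ)+1) := by nlinarith

/-- there is an absolute constant `C > 0` such that for every irrational
`α` with convergent denominators `q` and every `k ≥ 2`,
`∑_{0<|q|<q_k} 1/‖qα‖ ≤ C·q_k·log(q_k + 1)`. -/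
theorem sum_inv_nint_upper_bound :
    ∃ C : ℝ, 0 < C ∧ ∀ (α : ℝ), Irrational α →
      ∀ (q : ℕ → ℕ), (∀ n, (q n : ℝ) = (GenContFract.of α).dens n) →
      ∀ k : ℕ, 2 ≤ k →
      ∑ i ∈ (Finset.Ioo (-(q k : ℤ)) (q k : ℤ)).erase 0, 1 / nint ((i : ℝ) * α)
        ≤ C * (q k : ℝ) * Real.log ((q k : ℝ) + 1) := by
  refine ⟨100, by norm_num, ?_⟩
  intro α hα q hq k hk
  obtain ⟨j, rfl⟩ : ∃ j, k = j + 1 := ⟨k-1, by omega⟩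
  have hQ2 : 2 ≤ q (j+1) := by
    have h1 : (1:ℝ) ≤ (q (j-1+1) : ℝ) := by rw [hq]; exact my_dens_ge_one hα _
    have h2 : (1:ℝ) ≤ (q (j-1) : ℝ) := by rw [hq]; exact my_dens_ge_one hα _
    have h3 : (q (j-1+1):ℝ) + (q (j-1):ℝ) ≤ (q (j-1+2) : ℝ) := by
      rw [hq, hq, hq]; exact my_dens_rec hα _
    have hj : j - 1 + 2 = j + 1 := by omega
    rw [hj] at h3
    have h4 : (2:ℝ) ≤ (q (j+1):ℝ) := by linarith
    exact_mod_cast h4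
  exact main_est α (q (j+1)) hQ2 (fun m p hm hmQ => key_sym hα q hq j m p hm hmQ)
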